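/- For every n ≥ 1 and every i with 0 ≤ i ≤ n-1, the Dickson invariants satisfy the recursion d_{n,i} = d_{n-1,i-1}^p + d_{n-1,i} · h_n, where by convention d_{n-1,-1} = 0 and d_{n-1,n-1} = 1, and d_{n-1,j} denotes the Dickson invariant formed from the first n-1 variables viewed inside S. -/

import Mathlib

open MvPolynomial

/-- `V p n k` : the set of `𝔽_p`-linear combinations of the first `k` variables. -/
noncomputable def V (p n k : ℕ) [Fact p.Prime] : Finset (MvPolynomial (Fin n) (ZMod p)) :=
  (Finset.univ : Finset (Fin n → ZMod p)).image
    (fun c => ∑ j ∈ Finset.univ.filter (fun j : Fin n => j.val < k), C (c j) * X j)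

/-- `f p n k = ∏_{u ∈ V_k} (X - C u)`. -/
noncomputable def f (p n k : ℕ) [Fact p.Prime] :
    Polynomial (MvPolynomial (Fin n) (ZMod p)) :=
  ∏ u ∈ V p n k, (Polynomial.X - Polynomial.C u)

/-- Dickson invariant `d_{k,i}`. -/
noncomputable def d (p n k i : ℕ) [Fact p.Prime] : MvPolynomial (Fin n) (ZMod p) :=
  (-1) ^ (k - i) * (f p n k).coeff (p ^ i)

/-- Borel generator: `hGen p n j` is `h_{j+1}` of the paper. -/
noncomputable def hGen (p n : ℕ) [Fact p.Prime] (j : Fin n) : MvPolynomial (Fin n) (ZMod p) :=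
  (Polynomial.eval (X j) (f p n j.val)) ^ (p - 1)

/-- Action of `GL_n(𝔽_p)` on `S` by linear substitution `g · y_j = ∑_i g_{ij} y_i`. -/
noncomputable def gact (p n : ℕ) [Fact p.Prime] (g : GL (Fin n) (ZMod p)) :
    MvPolynomial (Fin n) (ZMod p) →ₐ[ZMod p] MvPolynomial (Fin n) (ZMod p) :=
  aeval (fun j : Fin n => ∑ i : Fin n, C ((g : Matrix (Fin n) (Fin n) (ZMod p)) i j) * X i)

section PRE
open Polynomial

lemma L1 (p : ℕ) [Fact p.Prime] :
    ∏ t : ZMod p, (Polynomial.X - Polynomial.C t) = Polynomial.X ^ p - Polynomial.X := by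
  have hp1 : 1 < p := (Fact.out : p.Prime).one_lt
  have hmonic : (Polynomial.X ^ p - Polynomial.X : (ZMod p)[X]).Monic :=
    monic_X_pow_sub (by simpa [degree_X] using (by exact_mod_cast hp1 : (1 : WithBot ℕ) < p))
  have hroots := FiniteField.roots_X_pow_card_sub_X (ZMod p)
  rw [ZMod.card] at hroots
  have hdeg := FiniteField.X_pow_card_sub_X_natDegree_eq (ZMod p) hp1
  have := prod_multiset_X_sub_C_of_monic_of_roots_card_eq hmonic
    (by rw [hroots, hdeg]; simp [ZMod.card])
  rw [hroots] at this
  rw [← this]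
  exact (Finset.prod_map_val Finset.univ _).symm

lemma field_pow (p : ℕ) [Fact p.Prime] {F : Type*} [Field F] [Algebra (ZMod p) F] (x : F) :
    ∏ t : ZMod p, (x - algebraMap (ZMod p) F t) = x ^ p - x := by
  have := congrArg (fun q => Polynomial.eval x (Polynomial.map (algebraMap (ZMod p) F) q)) (L1 p)
  simpa [Polynomial.eval_prod] using this

lemma fieldE (p : ℕ) [Fact p.Prime] {F : Type*} [Field F] [Algebra (ZMod p) F] (a w : F) :
    ∏ t : ZMod p, (w - algebraMap (ZMod p) F t * a) = w ^ p - a ^ (p - 1) * w := by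
  have hp1 : 1 < p := (Fact.out : p.Prime).one_lt
  by_cases ha : a = 0
  · simp [ha, Finset.prod_const, ZMod.card, zero_pow (by omega : p - 1 ≠ 0)]
  · have key : ∀ t : ZMod p, w - algebraMap (ZMod p) F t * a
        = a * (w * a⁻¹ - algebraMap (ZMod p) F t) := by
      intro t; field_simp
    rw [Finset.prod_congr rfl (fun t _ => key t), Finset.prod_mul_distrib,
      Finset.prod_const, Finset.card_univ, ZMod.card, field_pow p (w * a⁻¹)]
    field_simp
    ring_nf
    have h2 : a ^ (p * 2) = a * a ^ p * a ^ (p - 1) := by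
      rw [← pow_succ', ← pow_add]; congr 1; omega
    have h3 : a ^ p = a * a ^ (p - 1) := by
      rw [← pow_succ']; congr 1; omega
    rw [inv_pow]
    have e1 : a * a ^ p * w ^ p * (a ^ p)⁻¹ = a * w ^ p := by
      field_simp
    rw [e1, h3]; ring

open MvPolynomial in
lemma domE (p n : ℕ) [Fact p.Prime] (a w : MvPolynomial (Fin n) (ZMod p)) :
    ∏ t : ZMod p, (w - MvPolynomial.C t * a) = w ^ p - a ^ (p - 1) * w := by
  letI R := MvPolynomial (Fin n) (ZMod p)
  letI F := FractionRing R
  letI : Algebra (ZMod p) F := ((algebraMap R F).comp (algebraMap (ZMod p) R)).toAlgebra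
  have hφ : Function.Injective (algebraMap R F) := IsFractionRing.injective R F
  apply hφ
  rw [map_prod, map_sub, map_pow, map_mul, map_pow]
  have halg : ∀ t : ZMod p, algebraMap R F (MvPolynomial.C t)
      = algebraMap (ZMod p) F t := fun t => rfl
  calc ∏ t : ZMod p, algebraMap R F (w - MvPolynomial.C t * a)
      = ∏ t : ZMod p, (algebraMap R F w - algebraMap (ZMod p) F t * algebraMap R F a) := by
        refine Finset.prod_congr rfl fun t _ => ?_
        rw [map_sub, map_mul, halg]
    _ = _ := by rw [fieldE p]

end PRE



lemma V_zero (p n : ℕ) [Fact p.Prime] : V p n 0 = {0} := by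
  simp only [V, Nat.not_lt_zero, Finset.filter_false, Finset.sum_empty]
  exact Finset.image_const Finset.univ_nonempty 0

lemma sum_split (p n k : ℕ) [Fact p.Prime] (hk : k < n) (c : Fin n → ZMod p) :
    ∑ j ∈ Finset.univ.filter (fun j : Fin n => j.val < k + 1), C (c j) * X j
      = (∑ j ∈ Finset.univ.filter (fun j : Fin n => j.val < k), C (c j) * X j)
        + C (c ⟨k, hk⟩) * (X ⟨k, hk⟩ : MvPolynomial (Fin n) (ZMod p)) := by
  have h : Finset.univ.filter (fun j : Fin n => j.val < k + 1)
      = insert ⟨k, hk⟩ (Finset.univ.filter (fun j : Fin n => j.val < k)) := by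
    ext j; simp [Fin.ext_iff]; omega
  rw [h, Finset.sum_insert (by simp)]
  ring

lemma V_succ (p n k : ℕ) [Fact p.Prime] (hk : k < n) :
    V p n (k + 1) = Finset.image
      (fun ut : MvPolynomial (Fin n) (ZMod p) × ZMod p => ut.1 + C ut.2 * X ⟨k, hk⟩)
      ((V p n k) ×ˢ (Finset.univ : Finset (ZMod p))) := by
  ext s
  constructor
  · intro hs
    obtain ⟨c, -, rfl⟩ := Finset.mem_image.mp hs
    refine Finset.mem_image.mpr ⟨⟨_, c ⟨k, hk⟩⟩, Finset.mem_product.mpr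
      ⟨Finset.mem_image.mpr ⟨c, Finset.mem_univ _, rfl⟩, Finset.mem_univ _⟩,
      (sum_split p n k hk c).symm⟩
  · intro hs
    obtain ⟨⟨u, t⟩, hmem, rfl⟩ := Finset.mem_image.mp hs
    obtain ⟨hu, -⟩ := Finset.mem_product.mp hmem
    obtain ⟨c, -, rfl⟩ := Finset.mem_image.mp hu
    refine Finset.mem_image.mpr ⟨Function.update c ⟨k, hk⟩ t, Finset.mem_univ _, ?_⟩
    rw [sum_split p n k hk]
    congr 1
    · refine Finset.sum_congr rfl fun j hj => ?_
      have hjk : j.val < k := by simpa using (Finset.mem_filter.mp hj).2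
      have : j ≠ ⟨k, hk⟩ := by
        intro h; rw [h] at hjk; exact absurd hjk (by simp)
      rw [Function.update_of_ne this]
    · rw [Function.update_self]

lemma coeff_zero_of_mem (p n k : ℕ) [Fact p.Prime] {u : MvPolynomial (Fin n) (ZMod p)}
    (hu : u ∈ V p n k) (j : Fin n) (hj : k ≤ j.val) :
    MvPolynomial.coeff (Finsupp.single j 1) u = 0 := by
  obtain ⟨c, -, rfl⟩ := Finset.mem_image.mp hu
  rw [MvPolynomial.coeff_sum]
  refine Finset.sum_eq_zero fun i hi => ?_
  have hik : i.val < k := by simpa using (Finset.mem_filter.mp hi).2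
  have hij : ¬ (Finsupp.single i 1 = Finsupp.single j (1:ℕ)) := by
    intro h
    have : i = j := by
      by_contra hne
      have := Finsupp.single_eq_single_iff i j 1 1 |>.mp h
      rcases this with ⟨h1, -⟩ | ⟨h1, -⟩
      · exact hne h1
      · exact one_ne_zero h1
    omega
  rw [MvPolynomial.coeff_C_mul, MvPolynomial.coeff_X', if_neg hij, mul_zero]

lemma coeff_CX (p n : ℕ) [Fact p.Prime] (t : ZMod p) (j : Fin n) :
    MvPolynomial.coeff (Finsupp.single j 1) (C t * X j) = t := by
  rw [MvPolynomial.coeff_C_mul, MvPolynomial.coeff_X', if_pos rfl, mul_one]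

lemma prod_succ (p n k : ℕ) [Fact p.Prime] (hk : k < n) (r : MvPolynomial (Fin n) (ZMod p)) :
    ∏ u ∈ V p n (k + 1), (r - u)
      = ∏ t : ZMod p, ∏ u ∈ V p n k, ((r - C t * X ⟨k, hk⟩) - u) := by
  rw [V_succ p n k hk, Finset.prod_image, Finset.prod_product_right]
  · refine Finset.prod_congr rfl fun t _ => Finset.prod_congr rfl fun u _ => by ring
  · rintro ⟨u, t⟩ h1 ⟨u', t'⟩ h2 heq
    have hu := (Finset.mem_product.mp h1).1
    have hu' := (Finset.mem_product.mp h2).1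
    have hc := congrArg (MvPolynomial.coeff (Finsupp.single ⟨k, hk⟩ 1)) heq
    simp only [MvPolynomial.coeff_add, coeff_CX,
      coeff_zero_of_mem p n k hu ⟨k, hk⟩ le_rfl,
      coeff_zero_of_mem p n k hu' ⟨k, hk⟩ le_rfl, zero_add] at hc
    subst hc
    have : u = u' := by
      have := add_right_cancel heq
      exact this
    simp [this]

lemma zero_mem_V (p n k : ℕ) [Fact p.Prime] : 0 ∈ V p n k :=
  Finset.mem_image.mpr ⟨0, Finset.mem_univ _, by simp⟩

lemma prod_zero (p n k : ℕ) [Fact p.Prime] :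
    ∏ u ∈ V p n k, ((0 : MvPolynomial (Fin n) (ZMod p)) - u) = 0 :=
  Finset.prod_eq_zero (zero_mem_V p n k) (by simp)

/-- closed form for level `k+1` assuming additivity at level `k`. -/
lemma prod_closed (p n k : ℕ) [Fact p.Prime] (hk : k < n)
    (hadd : ∀ r s : MvPolynomial (Fin n) (ZMod p),
      ∏ u ∈ V p n k, (r + s - u) = (∏ u ∈ V p n k, (r - u)) + ∏ u ∈ V p n k, (s - u))
    (r : MvPolynomial (Fin n) (ZMod p)) :
    ∏ u ∈ V p n (k + 1), (r - u)
      = (∏ u ∈ V p n k, (r - u)) ^ p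
        - (∏ u ∈ V p n k, (X ⟨k, hk⟩ - u)) ^ (p - 1) * ∏ u ∈ V p n k, (r - u) := by
  let Φ : MvPolynomial (Fin n) (ZMod p) →+ MvPolynomial (Fin n) (ZMod p) :=
    AddMonoidHom.mk' (fun r => ∏ u ∈ V p n k, (r - u))
    (fun a b => by simpa using hadd a b)
  have hΦ : ∀ r : MvPolynomial (Fin n) (ZMod p), Φ r = ∏ u ∈ V p n k, (r - u) := fun _ => rfl
  have key : ∀ t : ZMod p, ∏ u ∈ V p n k, ((r - C t * X ⟨k, hk⟩) - u)
      = Φ r - C t * Φ (X ⟨k, hk⟩) := by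
    intro t
    have h1 : Φ (r - C t * X ⟨k, hk⟩) = Φ r - Φ (C t * X ⟨k, hk⟩) := map_sub Φ _ _
    have h2 : Φ (C t * X ⟨k, hk⟩) = C t * Φ (X ⟨k, hk⟩) := by
      have hsm : (C t : MvPolynomial (Fin n) (ZMod p)) * X ⟨k, hk⟩
          = (t.val : ℕ) • (X ⟨k, hk⟩ : MvPolynomial (Fin n) (ZMod p)) := by
        rw [nsmul_eq_mul]
        congr 1
        rw [← map_natCast (C : ZMod p →+* MvPolynomial (Fin n) (ZMod p)) t.val,
          ZMod.natCast_val, ZMod.cast_id]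
      rw [hsm, map_nsmul, nsmul_eq_mul,
        ← map_natCast (C : ZMod p →+* MvPolynomial (Fin n) (ZMod p)) t.val,
        ZMod.natCast_val, ZMod.cast_id]
    rw [← hΦ, h1, h2]
  rw [prod_succ p n k hk, Finset.prod_congr rfl (fun t _ => key t), domE p n]
  rw [hΦ, hΦ]

lemma prod_add (p n : ℕ) [Fact p.Prime] : ∀ k, k ≤ n →
    ∀ r s : MvPolynomial (Fin n) (ZMod p),
      ∏ u ∈ V p n k, (r + s - u) = (∏ u ∈ V p n k, (r - u)) + ∏ u ∈ V p n k, (s - u) := by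
  intro k
  induction k with
  | zero => intro _ r s; rw [V_zero]; simp
  | succ k ih =>
    intro hk r s
    have hkn : k < n := hk
    have ihk := ih (le_of_lt hkn)
    rw [prod_closed p n k hkn ihk, prod_closed p n k hkn ihk, prod_closed p n k hkn ihk,
      ihk r s]
    haveI : CharP (MvPolynomial (Fin n) (ZMod p)) p := by infer_instance
    rw [add_pow_char]
    ring

lemma eval_f (p n k : ℕ) [Fact p.Prime] (r : MvPolynomial (Fin n) (ZMod p)) :
    (f p n k).eval r = ∏ u ∈ V p n k, (r - u) := by
  simp [f, Polynomial.eval_prod]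

lemma f_rec (p n : ℕ) [Fact p.Prime] (hn : 1 ≤ n) :
    f p n n = (f p n (n - 1)) ^ p
      - Polynomial.C (hGen p n ⟨n - 1, by omega⟩) * f p n (n - 1) := by
  haveI : Nonempty (Fin n) := ⟨⟨0, hn⟩⟩
  apply Polynomial.funext
  intro r
  have hk : n - 1 < n := by omega
  have hV : V p n (n - 1 + 1) = V p n n := by rw [Nat.sub_add_cancel hn]
  rw [Polynomial.eval_sub, Polynomial.eval_mul, Polynomial.eval_pow, Polynomial.eval_C,
    eval_f, eval_f, ← hV, prod_closed p n (n - 1) hk (prod_add p n (n - 1) (by omega)) r]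
  congr 1
  rw [hGen, eval_f]

lemma coeff_f_pow (p n : ℕ) [Fact p.Prime] (g : Polynomial (MvPolynomial (Fin n) (ZMod p)))
    (i : ℕ) (hi : 1 ≤ i) :
    (g ^ p).coeff (p ^ i) = (g.coeff (p ^ (i - 1))) ^ p := by
  have hp : 0 < p := (Fact.out : p.Prime).pos
  rw [← Polynomial.map_frobenius_expand, Polynomial.coeff_map,
    Polynomial.coeff_expand hp, if_pos (dvd_pow_self p (by omega : i ≠ 0))]
  have hpi : p ^ i = p ^ (i - 1) * p := by rw [← pow_succ]; congr 1; omega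
  rw [hpi, Nat.mul_div_cancel _ hp]; rfl

lemma coeff_f_pow_one (p n : ℕ) [Fact p.Prime] (g : Polynomial (MvPolynomial (Fin n) (ZMod p))) :
    (g ^ p).coeff 1 = 0 := by
  have hp : 1 < p := (Fact.out : p.Prime).one_lt
  rw [← Polynomial.map_frobenius_expand, Polynomial.coeff_map,
    Polynomial.coeff_expand (by omega), if_neg (Nat.Prime.not_dvd_one (Fact.out))]
  simp


/-- the recursion `d_{n,i} = d_{n-1,i-1}^p + d_{n-1,i} · h_n`
(with `d_{n-1,-1} = 0`). -/
theorem stmt10 (p n : ℕ) [Fact p.Prime] (hn : 1 ≤ n) (i : ℕ) (hi : i ≤ n - 1) :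
    d p n n i = (if i = 0 then 0 else (d p n (n - 1) (i - 1)) ^ p)
      + d p n (n - 1) i * hGen p n ⟨n - 1, by omega⟩ := by
  have hp : p.Prime := Fact.out
  simp only [d]
  rw [f_rec p n hn, Polynomial.coeff_sub, Polynomial.coeff_C_mul]
  rcases Nat.eq_zero_or_pos i with rfl | hi1
  · rw [if_pos rfl, pow_zero p, coeff_f_pow_one, zero_sub, zero_add]
    have h1 : (-1 : MvPolynomial (Fin n) (ZMod p)) ^ (n - 0)
        = (-1) ^ (n - 1 - 0) * (-1) := by
      rw [← pow_succ]; congr 1; omega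
    rw [h1]
    ring
  · rw [if_neg (by omega), coeff_f_pow p n _ i hi1]
    have h1 : (-1 : MvPolynomial (Fin n) (ZMod p)) ^ (n - i)
        = (-1) ^ (n - 1 - i) * (-1) := by
      rw [← pow_succ]; congr 1; omega
    have h2 : n - 1 - (i - 1) = n - i := by omega
    have h3 : (((-1 : MvPolynomial (Fin n) (ZMod p)) ^ (n - i)) ^ p) = (-1) ^ (n - i) := by
      rw [← pow_mul, mul_comm, pow_mul, neg_one_pow_char (MvPolynomial (Fin n) (ZMod p)) p]
    rw [h2, mul_pow, h3, h1]
    ring
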